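/- arXiv:2603.01378 — 3 statements merged into one kernel-verified Lean document; each statement's English description precedes it below -/
import Mathlib

section
/- Let v_1,…,v_n be vectors in ℝ^r and suppose η ∈ ℝ^r is feasible (1 + ⟨η, v_i⟩ > 0 for every i) and solves the empirical-likelihood Lagrange equation ∑_{i=1}^n v_i/(1 + ⟨η, v_i⟩) = 0, and let p_i = n^{-1}(1 + ⟨η, v_i⟩)^{-1} be the associated empirical-likelihood weights. Then for any real numbers q_1,…,q_n with q_i > 0 for all i, ∑_{i=1}^n q_i = 1 and ∑_{i=1}^n q_i v_i = 0, one has ∑_{i=1}^n log q_i ≤ ∑_{i=1}^n log p_i. That is, the weights p_i maximize the empirical log-likelihood ∑_i log q_i over all probability weights satisfying the moment constraint ∑_i q_i v_i = 0. -/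
open scoped RealInnerProductSpace

/-- The empirical-likelihood weights associated with a feasible solution of the
Lagrange equation maximize the empirical log-likelihood among all probability
weights satisfying the moment constraint. -/
theorem stmt1 {n r : ℕ} (v : Fin n → EuclideanSpace ℝ (Fin r))
    (η : EuclideanSpace ℝ (Fin r))
    (hfeas : ∀ i, 0 < 1 + ⟪η, v i⟫)
    (hlag : ∑ i, (1 + ⟪η, v i⟫)⁻¹ • v i = 0)
    (p : Fin n → ℝ) (hp : ∀ i, p i = (n : ℝ)⁻¹ * (1 + ⟪η, v i⟫)⁻¹)
    (q : Fin n → ℝ) (hqpos : ∀ i, 0 < q i) (hqsum : ∑ i, q i = 1)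
    (hqmom : ∑ i, q i • v i = 0) :
    ∑ i, Real.log (q i) ≤ ∑ i, Real.log (p i) := by
  rcases Nat.eq_zero_or_pos n with h0 | hn
  · subst h0; simp
  have hnR : (0:ℝ) < n := by exact_mod_cast hn
  have hppos : ∀ i, 0 < p i := fun i => by
    rw [hp i]; exact mul_pos (inv_pos.mpr hnR) (inv_pos.mpr (hfeas i))
  have key : ∀ i, Real.log (q i) - Real.log (p i) ≤ q i / p i - 1 := fun i => by
    rw [← Real.log_div (hqpos i).ne' (hppos i).ne']
    exact Real.log_le_sub_one_of_pos (div_pos (hqpos i) (hppos i))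
  have hinner : ∑ i, q i * ⟪η, v i⟫ = 0 := by
    have : ⟪η, ∑ i, q i • v i⟫ = ∑ i, q i * ⟪η, v i⟫ := by
      rw [inner_sum]
      exact Finset.sum_congr rfl fun i _ => real_inner_smul_right η (v i) (q i)
    rw [← this, hqmom, inner_zero_right]
  have hratio : ∀ i, q i / p i = (n:ℝ) * (q i * (1 + ⟪η, v i⟫)) := fun i => by
    rw [hp i]
    field_simp
  have hsum : ∑ i, (q i / p i - 1) = 0 := by
    rw [Finset.sum_sub_distrib]
    simp only [hratio]
    rw [← Finset.mul_sum]
    have : ∑ i, q i * (1 + ⟪η, v i⟫) = 1 := by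
      have : ∑ i, q i * (1 + ⟪η, v i⟫) = ∑ i, q i + ∑ i, q i * ⟪η, v i⟫ := by
        rw [← Finset.sum_add_distrib]; congr 1; ext i; ring
      rw [this, hqsum, hinner]; ring
    rw [this]; simp
  have hle : ∑ i, (Real.log (q i) - Real.log (p i)) ≤ ∑ i, (q i / p i - 1) :=
    Finset.sum_le_sum (fun i _ => key i)
  rw [Finset.sum_sub_distrib] at hle
  linarith [hle, hsum]
end

section
/- Let v_1,…,v_n be vectors in ℝ^r. If the zero vector 0 lies in the interior of the convex hull of {v_1,…,v_n}, then there exists a feasible η ∈ ℝ^r (i.e., 1 + ⟨η, v_i⟩ > 0 for every i) that solves the empirical-likelihood Lagrange equation ∑_{i=1}^n v_i/(1 + ⟨η, v_i⟩) = 0. -/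
open scoped RealInnerProductSpace
open Finset

-- Step A: positive representation of 0
lemma stepA {n r : ℕ} (v : Fin n → EuclideanSpace ℝ (Fin r))
    (h0 : (0 : EuclideanSpace ℝ (Fin r)) ∈ interior (convexHull ℝ (Set.range v))) :
    ∃ q : Fin n → ℝ, (∀ i, 0 < q i) ∧ ∑ i, q i = 1 ∧ ∑ i, q i • v i = 0 := by
  have hn : 0 < n := by
    rcases Nat.eq_zero_or_pos n with h | h
    · subst h
      simp only [Set.range_eq_empty, convexHull_empty, interior_empty] at h0
      exact absurd h0 (Set.notMem_empty _)
    · exact h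
  -- barycenter
  set b : EuclideanSpace ℝ (Fin r) := (n : ℝ)⁻¹ • ∑ i, v i with hb
  obtain ⟨ε, hε, hball⟩ := Metric.isOpen_iff.mp isOpen_interior 0 h0
  -- choose t > 0 with ‖(-t) • b‖ < ε
  obtain ⟨t, ht, htb⟩ : ∃ t : ℝ, 0 < t ∧ ‖(-t) • b‖ < ε := by
    refine ⟨ε / (2 * (‖b‖ + 1)), by positivity, ?_⟩
    rw [norm_smul, norm_neg, Real.norm_eq_abs, abs_of_pos (by positivity)]
    calc ε / (2 * (‖b‖ + 1)) * ‖b‖ < ε / (2 * (‖b‖ + 1)) * (‖b‖ + 1) := by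
          apply mul_lt_mul_of_pos_left (by linarith) (by positivity)
      _ = ε / 2 := by field_simp
      _ < ε := by linarith
  have hmem : (-t) • b ∈ convexHull ℝ (Set.range v) :=
    interior_subset (hball (by simpa using htb))
  rw [convexHull_range_eq_exists_affineCombination] at hmem
  obtain ⟨s, w, hw0, hw1, hws⟩ := hmem
  rw [s.affineCombination_eq_linear_combination v w hw1] at hws
  set W : Fin n → ℝ := fun i => if i ∈ s then w i else 0 with hW
  have hW0 : ∀ i, 0 ≤ W i := fun i => by
    by_cases h : i ∈ s <;> simp [hW, h, hw0 i]
  have hW1 : ∑ i, W i = 1 := by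
    rw [hW]; rw [Finset.sum_ite_mem, Finset.univ_inter]; exact hw1
  have hWs : ∑ i, W i • v i = (-t) • b := by
    rw [hW, ← hws]
    simp only [ite_smul, zero_smul]
    rw [Finset.sum_ite_mem, Finset.univ_inter]
  refine ⟨fun i => (1 + t)⁻¹ * (W i + t / n), ?_, ?_, ?_⟩
  · intro i
    have := hW0 i
    have : 0 < W i + t / n := by positivity
    positivity
  · rw [← Finset.mul_sum, Finset.sum_add_distrib, hW1, Finset.sum_const]
    simp only [Finset.card_univ, Fintype.card_fin, nsmul_eq_mul]
    rw [mul_div_cancel₀ _ (by positivity : (n:ℝ) ≠ 0)]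
    rw [inv_mul_eq_one₀ (by positivity)]
  · have : ∑ i, (t / n) • v i = t • b := by
      rw [hb, ← Finset.smul_sum, smul_smul]
      congr 1
      try field_simp
    calc ∑ i, ((1 + t)⁻¹ * (W i + t / n)) • v i
        = (1+t)⁻¹ • (∑ i, W i • v i + ∑ i, (t/n) • v i) := by
          rw [smul_add, Finset.smul_sum, Finset.smul_sum, ← Finset.sum_add_distrib]
          refine Finset.sum_congr rfl fun i _ => ?_
          rw [mul_smul, add_smul, smul_add]
      _ = 0 := by rw [hWs, this, neg_smul, neg_add_cancel, smul_zero]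

lemma stepB {n r : ℕ} (hn : 0 < n) (v : Fin n → EuclideanSpace ℝ (Fin r))
    (q : Fin n → ℝ) (hq0 : ∀ i, 0 < q i) (hq1 : ∑ i, q i = 1)
    (hqs : ∑ i, q i • v i = 0) :
    ∃ p : EuclideanSpace ℝ (Fin n), (∀ i, 0 < p i) ∧ (∑ i, p i = 1) ∧
      (∑ i, p i • v i = 0) ∧
      ∀ d : EuclideanSpace ℝ (Fin n), (∑ i, d i = 0) → (∑ i, d i • v i = 0) →
        ∑ i, d i * (p i)⁻¹ = 0 := by
  have : Nonempty (Fin n) := ⟨⟨0, hn⟩⟩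
  set K : Set (EuclideanSpace ℝ (Fin n)) :=
    {p | (∀ i, 0 ≤ p i) ∧ (∑ i, p i = 1) ∧ (∑ i, p i • v i = 0)} with hK
  have hproj : ∀ i : Fin n, Continuous fun p : EuclideanSpace ℝ (Fin n) => p i :=
    fun i => (EuclideanSpace.proj i).continuous
  have hKclosed : IsClosed K := by
    have h1 : IsClosed {p : EuclideanSpace ℝ (Fin n) | ∀ i, 0 ≤ p i} := by
      rw [Set.setOf_forall]
      exact isClosed_iInter fun i => isClosed_le continuous_const (hproj i)
    have h2 : IsClosed {p : EuclideanSpace ℝ (Fin n) | ∑ i, p i = 1} :=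
      isClosed_eq (continuous_finset_sum _ fun i _ => hproj i) continuous_const
    have h3 : IsClosed {p : EuclideanSpace ℝ (Fin n) | ∑ i, p i • v i = 0} :=
      isClosed_eq (continuous_finset_sum _ fun i _ => (hproj i).smul continuous_const)
        continuous_const
    exact h1.inter (h2.inter h3)
  have hKcompact : IsCompact K := by
    rw [Metric.isCompact_iff_isClosed_bounded]
    refine ⟨hKclosed, Metric.isBounded_iff_subset_closedBall 0 |>.2 ⟨1, fun p hp => ?_⟩⟩
    obtain ⟨hp0, hp1, -⟩ := hp
    simp only [Metric.mem_closedBall, dist_zero_right]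
    have hnorm : ‖p‖ ^ 2 ≤ 1 := by
      rw [EuclideanSpace.norm_eq]
      rw [Real.sq_sqrt (by positivity)]
      calc ∑ i, ‖p i‖ ^ 2 = ∑ i, p i ^ 2 := by
            refine Finset.sum_congr rfl fun i _ => ?_
            rw [Real.norm_eq_abs, sq_abs]
        _ ≤ (∑ i, p i) ^ 2 := sum_sq_le_sq_sum_of_nonneg fun i _ => hp0 i
        _ = 1 := by rw [hp1]; norm_num
    nlinarith [norm_nonneg p]
  have hq' : (WithLp.equiv 2 (Fin n → ℝ)).symm q ∈ K := by
    refine ⟨fun i => (hq0 i).le, ?_, ?_⟩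
    · simpa using hq1
    · simpa using hqs
  have hfc : Continuous fun p : EuclideanSpace ℝ (Fin n) => ∏ i, p i :=
    continuous_finset_prod _ fun i _ => hproj i
  obtain ⟨p, hpK, hpmax⟩ := hKcompact.exists_isMaxOn ⟨_, hq'⟩ hfc.continuousOn
  obtain ⟨hp0, hp1, hps⟩ := hpK
  have hppos : ∀ i, 0 < p i := by
    have hqpos : (0:ℝ) < ∏ i, q i := Finset.prod_pos fun i _ => hq0 i
    have hple : ∏ i, q i ≤ ∏ i, p i := by
      have := hpmax hq'
      simpa using this
    intro i
    rcases lt_or_eq_of_le (hp0 i) with h | h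
    · exact h
    · exfalso
      have : ∏ j, p j = 0 := Finset.prod_eq_zero (Finset.mem_univ i) h.symm
      rw [this] at hple
      linarith
  refine ⟨p, hppos, hp1, hps, ?_⟩
  intro d hd1 hd2
  -- first-order condition
  have hne : (Finset.univ : Finset (Fin n)).Nonempty := Finset.univ_nonempty
  set δ : ℝ := Finset.univ.inf' hne (fun i => p i / (|d i| + 1)) with hδ
  have hδpos : 0 < δ := by
    rw [hδ, Finset.lt_inf'_iff]
    intro i _
    have := hppos i
    positivity
  have hmem : ∀ t : ℝ, |t| < δ → ∀ i, 0 < p i + t * d i := by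
    intro t ht i
    have hδi : δ ≤ p i / (|d i| + 1) := Finset.inf'_le _ (Finset.mem_univ i)
    have habs : |t * d i| < p i := by
      rw [abs_mul]
      calc |t| * |d i| ≤ |t| * (|d i| + 1) := by
            apply mul_le_mul_of_nonneg_left (by linarith) (abs_nonneg t)
        _ < (p i / (|d i| + 1)) * (|d i| + 1) := by
            apply mul_lt_mul_of_pos_right (lt_of_lt_of_le ht hδi) (by positivity)
        _ = p i := by field_simp
    have := neg_lt_of_abs_lt habs
    linarith
  set φ : ℝ → ℝ := fun t => ∑ i, Real.log (p i + t * d i) with hφ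
  have hlocal : IsLocalMax φ 0 := by
    filter_upwards [Metric.ball_mem_nhds (0:ℝ) hδpos] with t ht
    rw [Metric.mem_ball, dist_zero_right, Real.norm_eq_abs] at ht
    have hpos := hmem t ht
    have hmemK : p + t • d ∈ K := by
      refine ⟨?_, ?_, ?_⟩
      · intro i
        simpa using (hpos i).le
      · simp only [PiLp.add_apply, PiLp.smul_apply, smul_eq_mul]
        rw [Finset.sum_add_distrib, hp1, ← Finset.mul_sum, hd1, mul_zero, add_zero]
      · simp only [PiLp.add_apply, PiLp.smul_apply, smul_eq_mul]
        calc ∑ i, (p i + t * d i) • v i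
            = ∑ i, p i • v i + t • ∑ i, d i • v i := by
              rw [Finset.smul_sum, ← Finset.sum_add_distrib]
              refine Finset.sum_congr rfl fun i _ => ?_
              rw [add_smul, mul_smul]
          _ = 0 := by rw [hps, hd2, smul_zero, add_zero]
    have hprodle : ∏ i, (p i + t * d i) ≤ ∏ i, p i := by
      have := hpmax hmemK
      simpa [PiLp.add_apply, PiLp.smul_apply, smul_eq_mul] using this
    have h1 : φ t = Real.log (∏ i, (p i + t * d i)) :=
      (Real.log_prod fun i _ => (hpos i).ne').symm
    have h2 : φ 0 = Real.log (∏ i, p i) := by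
      rw [hφ]
      simp only [zero_mul, add_zero]
      exact (Real.log_prod fun i _ => (hppos i).ne').symm
    rw [h1, h2]
    exact Real.log_le_log (Finset.prod_pos fun i _ => hpos i) hprodle
  have hder : HasDerivAt φ (∑ i, d i * (p i)⁻¹) 0 := by
    apply HasDerivAt.fun_sum
    intro i _
    have h1 : HasDerivAt (fun t : ℝ => p i + t * d i) (d i) 0 := by
      simpa using (hasDerivAt_mul_const (d i)).const_add (p i)
    have := h1.log (by simpa using (hppos i).ne')
    simpa [div_eq_mul_inv] using this
  have := hlocal.hasDerivAt_eq_zero hder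
  rw [← this]

lemma stepC {n r : ℕ} (hn : 0 < n) (v : Fin n → EuclideanSpace ℝ (Fin r))
    (p : EuclideanSpace ℝ (Fin n)) (hp0 : ∀ i, 0 < p i) (hp1 : ∑ i, p i = 1)
    (hps : ∑ i, p i • v i = 0)
    (hfoc : ∀ d : EuclideanSpace ℝ (Fin n), (∑ i, d i = 0) → (∑ i, d i • v i = 0) →
        ∑ i, d i * (p i)⁻¹ = 0) :
    ∃ η : EuclideanSpace ℝ (Fin r),
      (∀ i, 0 < 1 + ⟪η, v i⟫) ∧ ∑ i, (1 + ⟪η, v i⟫)⁻¹ • v i = 0 := by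
  set ones : EuclideanSpace ℝ (Fin n) := (WithLp.equiv 2 _).symm (fun _ => (1:ℝ)) with hones
  set c : Fin r → EuclideanSpace ℝ (Fin n) :=
    fun k => (WithLp.equiv 2 _).symm (fun i => v i k) with hc
  set U : Submodule ℝ (EuclideanSpace ℝ (Fin n)) :=
    (ℝ ∙ ones) ⊔ Submodule.span ℝ (Set.range c) with hU
  set u : EuclideanSpace ℝ (Fin n) := (WithLp.equiv 2 _).symm (fun i => (p i)⁻¹) with hu
  have huU : u ∈ U := by
    rw [← Submodule.orthogonal_orthogonal U, Submodule.mem_orthogonal]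
    intro d hd
    have hd1 : ∑ i, d i = 0 := by
      have h := hd ones (Submodule.mem_sup_left (Submodule.mem_span_singleton_self _))
      simpa [PiLp.inner_apply, RCLike.inner_apply, hones, WithLp.equiv_symm_apply, PiLp.toLp_apply] using h
    have hd2 : ∑ i, d i • v i = 0 := by
      ext k
      have h := hd (c k) (Submodule.mem_sup_right (Submodule.subset_span ⟨k, rfl⟩))
      rw [PiLp.inner_apply] at h
      simp only [RCLike.inner_apply, conj_trivial, hc, WithLp.equiv_symm_apply, PiLp.toLp_apply] at h
      have := map_sum (EuclideanSpace.proj k) (fun i => d i • v i) Finset.univ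
      simp only [map_smul, PiLp.proj_apply, smul_eq_mul] at this
      have h0 : (∑ i, d i • v i) k = ∑ i, d i * v i k := this
      rw [h0]
      show _ = (0 : EuclideanSpace ℝ (Fin r)) k
      rw [show (0 : EuclideanSpace ℝ (Fin r)) k = 0 from rfl, ← h]
    have := hfoc d hd1 hd2
    rw [PiLp.inner_apply]
    simpa [RCLike.inner_apply, hu, WithLp.equiv_symm_apply, PiLp.toLp_apply, mul_comm] using this
  obtain ⟨x, hx, y, hy, hxy⟩ := Submodule.mem_sup.mp huU
  obtain ⟨lam, rfl⟩ := Submodule.mem_span_singleton.mp hx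
  obtain ⟨μ, rfl⟩ := (Submodule.mem_span_range_iff_exists_fun ℝ).mp hy
  have hkey : ∀ i, (p i)⁻¹ = lam + ∑ k, μ k * v i k := by
    intro i
    have := congrArg (EuclideanSpace.proj i) hxy
    simp only [map_add, map_smul, map_sum, PiLp.proj_apply, smul_eq_mul, hones, hc, hu,
      WithLp.equiv_symm_apply, PiLp.toLp_apply] at this
    rw [← this, mul_one]
  have hpvk : ∀ k, ∑ i, p i * v i k = 0 := by
    intro k
    have := congrArg (EuclideanSpace.proj k) hps
    simp only [map_sum, map_smul, PiLp.proj_apply, smul_eq_mul, map_zero] at this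
    exact this
  have hlam : lam = n := by
    have h1 : ∑ i, p i * (p i)⁻¹ = (n : ℝ) := by
      have : ∀ i : Fin n, p i * (p i)⁻¹ = 1 := fun i => mul_inv_cancel₀ (hp0 i).ne'
      simp [this]
    have h2 : ∑ i, p i * (lam + ∑ k, μ k * v i k) = lam := by
      have : ∀ i : Fin n, p i * (lam + ∑ k, μ k * v i k)
          = p i * lam + ∑ k, μ k * (p i * v i k) := by
        intro i
        rw [mul_add, Finset.mul_sum]
        congr 1
        exact Finset.sum_congr rfl fun k _ => by ring
      rw [Finset.sum_congr rfl fun i _ => this i, Finset.sum_add_distrib,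
        ← Finset.sum_mul, hp1, one_mul, Finset.sum_comm]
      have : ∀ k : Fin r, ∑ i, μ k * (p i * v i k) = 0 := by
        intro k
        rw [← Finset.mul_sum, hpvk k, mul_zero]
      rw [Finset.sum_congr rfl fun k _ => this k, Finset.sum_const, smul_zero, add_zero]
    have h3 : ∑ i, p i * (p i)⁻¹ = ∑ i, p i * (lam + ∑ k, μ k * v i k) :=
      Finset.sum_congr rfl fun i _ => by rw [hkey i]
    rw [h3, h2] at h1
    exact h1
  have hnR : (0:ℝ) < n := by exact_mod_cast hn
  set η : EuclideanSpace ℝ (Fin r) := (n:ℝ)⁻¹ • (WithLp.equiv 2 _).symm μ with hη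
  have hinner : ∀ i, 1 + ⟪η, v i⟫ = (n:ℝ)⁻¹ * (p i)⁻¹ := by
    intro i
    rw [hη, inner_smul_left]
    simp only [RCLike.conj_to_real, PiLp.inner_apply, RCLike.inner_apply, conj_trivial,
      WithLp.equiv_symm_apply, PiLp.toLp_apply]
    rw [hkey i, hlam]
    field_simp
    exact congrArg _ (Finset.sum_congr rfl fun _ _ => mul_comm _ _)
  refine ⟨η, fun i => ?_, ?_⟩
  · rw [hinner i]
    have := hp0 i
    positivity
  · have : ∀ i : Fin n, (1 + ⟪η, v i⟫)⁻¹ = (n:ℝ) * p i := by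
      intro i
      rw [hinner i, mul_inv, inv_inv, inv_inv]
    rw [Finset.sum_congr rfl fun i _ => by rw [this i]]
    calc ∑ i, ((n:ℝ) * p i) • v i = (n:ℝ) • ∑ i, p i • v i := by
          rw [Finset.smul_sum]
          exact Finset.sum_congr rfl fun i _ => by rw [mul_smul]
      _ = 0 := by rw [hps, smul_zero]

/-- If the zero vector lies in the interior of the convex hull of the
constraint vectors, then there exists a feasible solution of the
empirical-likelihood Lagrange equation. -/
theorem stmt2 {n r : ℕ} (v : Fin n → EuclideanSpace ℝ (Fin r))
    (h0 : (0 : EuclideanSpace ℝ (Fin r)) ∈ interior (convexHull ℝ (Set.range v))) :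
    ∃ η : EuclideanSpace ℝ (Fin r),
      (∀ i, 0 < 1 + ⟪η, v i⟫) ∧ ∑ i, (1 + ⟪η, v i⟫)⁻¹ • v i = 0 := by
  obtain ⟨q, hq0, hq1, hqs⟩ := stepA v h0
  have hn : 0 < n := by
    rcases Nat.eq_zero_or_pos n with h | h
    · subst h; simp at hq1
    · exact h
  obtain ⟨p, hp0, hp1, hps, hfoc⟩ := stepB hn v q hq0 hq1 hqs
  exact stepC hn v p hp0 hp1 hps hfoc
end

section
/- Let v_1,…,v_n be vectors in ℝ^r whose linear span is all of ℝ^r. Then there is at most one feasible η ∈ ℝ^r (i.e., with 1 + ⟨η, v_i⟩ > 0 for every i) solving the empirical-likelihood Lagrange equation ∑_{i=1}^n v_i/(1 + ⟨η, v_i⟩) = 0. -/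
open scoped RealInnerProductSpace

theorem aux_inv_sub (a b : ℝ) (ha : a ≠ 0) (hb : b ≠ 0) :
    (a⁻¹ - b⁻¹) * (b - a) = (b - a) ^ 2 * (a⁻¹ * b⁻¹) := by
  field_simp

/-- If the constraint vectors span ℝ^r, there is at most one feasible solution
of the empirical-likelihood Lagrange equation. -/
theorem stmt3 {n r : ℕ} (v : Fin n → EuclideanSpace ℝ (Fin r))
    (hspan : Submodule.span ℝ (Set.range v) = ⊤) :
    ∀ η₁ η₂ : EuclideanSpace ℝ (Fin r),
      (∀ i, 0 < 1 + ⟪η₁, v i⟫) → (∑ i, (1 + ⟪η₁, v i⟫)⁻¹ • v i = 0) →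
      (∀ i, 0 < 1 + ⟪η₂, v i⟫) → (∑ i, (1 + ⟪η₂, v i⟫)⁻¹ • v i = 0) →
      η₁ = η₂ := by
  intro η₁ η₂ h1 e1 h2 e2
  set d := η₂ - η₁ with hd
  -- inner product of each equation with d
  have A1 : ∑ i, (1 + ⟪η₁, v i⟫)⁻¹ * ⟪d, v i⟫ = 0 := by
    have := congrArg (fun w : EuclideanSpace ℝ (Fin r) => ⟪d, w⟫) e1
    simpa [inner_sum, inner_smul_right] using this
  have A2 : ∑ i, (1 + ⟪η₂, v i⟫)⁻¹ * ⟪d, v i⟫ = 0 := by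
    have := congrArg (fun w : EuclideanSpace ℝ (Fin r) => ⟪d, w⟫) e2
    simpa [inner_sum, inner_smul_right] using this
  have hz : ∑ i, ((1 + ⟪η₁, v i⟫)⁻¹ - (1 + ⟪η₂, v i⟫)⁻¹) * ⟪d, v i⟫ = 0 := by
    simp only [sub_mul, Finset.sum_sub_distrib, A1, A2, sub_zero]
  have heq : ∀ i ∈ Finset.univ,
      ((1 + ⟪η₁, v i⟫)⁻¹ - (1 + ⟪η₂, v i⟫)⁻¹) * ⟪d, v i⟫
        = ⟪d, v i⟫ ^ 2 * ((1 + ⟪η₁, v i⟫)⁻¹ * (1 + ⟪η₂, v i⟫)⁻¹) := by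
    intro i _
    have ha := (h1 i).ne'
    have hb := (h2 i).ne'
    have hc : ⟪d, v i⟫ = (1 + ⟪η₂, v i⟫) - (1 + ⟪η₁, v i⟫) := by
      rw [hd, inner_sub_left]; ring
    rw [hc]
    exact aux_inv_sub (1 + ⟪η₁, v i⟫) (1 + ⟪η₂, v i⟫) ha hb
  rw [Finset.sum_congr rfl heq] at hz
  have hzero : ∀ i, ⟪d, v i⟫ = 0 := by
    intro i
    have hnn : ∀ i ∈ Finset.univ,
        0 ≤ ⟪d, v i⟫ ^ 2 * ((1 + ⟪η₁, v i⟫)⁻¹ * (1 + ⟪η₂, v i⟫)⁻¹) := fun i _ =>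
      mul_nonneg (sq_nonneg _) (mul_nonneg (inv_nonneg.2 (h1 i).le) (inv_nonneg.2 (h2 i).le))
    have := (Finset.sum_eq_zero_iff_of_nonneg hnn).1 hz i (Finset.mem_univ i)
    have hpos : 0 < (1 + ⟪η₁, v i⟫)⁻¹ * (1 + ⟪η₂, v i⟫)⁻¹ :=
      mul_pos (inv_pos.2 (h1 i)) (inv_pos.2 (h2 i))
    have hsq : ⟪d, v i⟫ ^ 2 = 0 := by
      rcases mul_eq_zero.1 this with h | h
      · exact h
      · exact absurd h hpos.ne'
    exact pow_eq_zero_iff (by norm_num) |>.1 hsq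
  -- d is orthogonal to the span, hence zero
  have hker : Submodule.span ℝ (Set.range v) ≤
      LinearMap.ker ((innerSL ℝ d : EuclideanSpace ℝ (Fin r) →L[ℝ] ℝ) :
        EuclideanSpace ℝ (Fin r) →ₗ[ℝ] ℝ) := by
    rw [Submodule.span_le]
    rintro _ ⟨i, rfl⟩
    simpa using hzero i
  rw [hspan, top_le_iff] at hker
  have hdd : ⟪d, d⟫ = 0 := by
    have := LinearMap.ext_iff.1 (LinearMap.ker_eq_top.1 hker) d
    simpa using this
  have : d = 0 := inner_self_eq_zero.1 hdd
  have := sub_eq_zero.1 this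
  exact this.symm
end
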